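/- If G is a 3-connected 1-cyclic simple graph on n ≥ 5 vertices, then either G is isomorphic to K^△_{n−3}, or every vertex of G has at least three neighbors of degree at least 4. -/
import Mathlib


/-- `G` is `k`-connected: more than `k` vertices, and removing fewer than `k`
vertices leaves a connected graph. -/
def SimpleGraph.KConnected {V : Type*} [Fintype V] (k : ℕ) (G : SimpleGraph V) : Prop :=
  k < Fintype.card V ∧ ∀ X : Set V, X.ncard < k → (G.induce (Xᶜ : Set V)).Connected
/-- The neighborhood of a vertex set `S`: vertices outside `S` with a neighbor in `S`. -/
def SimpleGraph.setNbhd {V : Type*} (G : SimpleGraph V) (S : Set V) : Set V :=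
  {v | v ∉ S ∧ ∃ u ∈ S, G.Adj u v}

/-- `G` is `k`-cyclic: every nonempty vertex set of size at most `k` is dominating
or has a cycle in its neighborhood. -/
def SimpleGraph.KCyclic {V : Type*} (k : ℕ) (G : SimpleGraph V) : Prop :=
  ∀ S : Set V, S.Nonempty → S.ncard ≤ k →
    S ∪ G.setNbhd S = Set.univ ∨ ¬ (G.induce (G.setNbhd S)).IsAcyclic

/-- `KTri s` is the graph obtained from a triangle by adding `s` new vertices,
each adjacent to the three triangle vertices (and to nothing else). -/
def KTri (s : ℕ) : SimpleGraph (Fin 3 ⊕ Fin s) :=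
  SimpleGraph.fromRel (fun a b => a.isLeft ∨ b.isLeft)

open SimpleGraph

section Aux

set_option linter.unusedSectionVars false

variable {V : Type*} [Fintype V] {G : SimpleGraph V}

private lemma no_escape {W : Type*} {H : SimpleGraph W} {D : Set W}
    (hD : ∀ a ∈ D, ∀ b, H.Adj a b → b ∈ D) {u w : W} (hu : u ∈ D)
    (hr : H.Reachable u w) : w ∈ D := by
  obtain ⟨p⟩ := hr
  induction p with
  | nil => exact hu
  | cons h q ih => exact ih (hD _ hu _ h)

private lemma sep_false (X D : Set V)
    (hconn : (G.induce (Xᶜ : Set V)).Connected)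
    (hclosed : ∀ a ∈ D, ∀ b, G.Adj a b → b ∈ X ∪ D)
    {u : V} (huD : u ∈ D) (huX : u ∉ X)
    {z : V} (hzX : z ∉ X) (hzD : z ∉ D) : False := by
  have hr : (G.induce (Xᶜ : Set V)).Reachable ⟨u, huX⟩ ⟨z, hzX⟩ := hconn ⟨u, huX⟩ ⟨z, hzX⟩
  have := no_escape (D := {a : (Xᶜ : Set V) | (a : V) ∈ D}) (fun a ha b hab => by
    have h2 : (b : V) ∈ X ∪ D := hclosed _ ha _ hab
    have hb : (b : V) ∉ X := b.2
    simpa [hb] using h2.resolve_left hb) huD hr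
  exact hzD this

private lemma exists_outside (S : Set V) (hS : S.ncard < Fintype.card V) :
    ∃ z, z ∉ S := by
  by_contra h
  push_neg at h
  have : S = Set.univ := Set.eq_univ_of_forall h
  rw [this, Set.ncard_univ, Nat.card_eq_fintype_card] at hS
  omega

private lemma mindeg (h3 : G.KConnected 3) (hn : 5 ≤ Fintype.card V) (u : V) :
    3 ≤ (G.neighborSet u).ncard := by
  by_contra h
  push_neg at h
  obtain ⟨z, hz⟩ := exists_outside (insert u (G.neighborSet u)) (by
    calc (insert u (G.neighborSet u)).ncard ≤ (G.neighborSet u).ncard + 1 :=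
          Set.ncard_insert_le _ _
    _ < 5 := by omega
    _ ≤ Fintype.card V := hn)
  simp only [Set.mem_insert_iff, not_or] at hz
  refine sep_false (G := G) (G.neighborSet u) {u} (h3.2 _ (by omega))
    (fun a ha b hab => ?_) rfl (by simp) hz.2 ?_
  · rcases ha with rfl
    exact Or.inl hab
  · simp only [Set.mem_singleton_iff]; exact hz.1

private lemma setNbhd_singleton (G : SimpleGraph V) (x : V) :
    G.setNbhd {x} = G.neighborSet x := by
  ext y
  simp only [SimpleGraph.setNbhd, Set.mem_setOf_eq, Set.mem_singleton_iff,
    SimpleGraph.mem_neighborSet, exists_eq_left]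
  exact ⟨fun h => h.2, fun h => ⟨(G.ne_of_adj h).symm, h⟩⟩

private lemma edge_avoiding {W : Type*} {H : SimpleGraph W} (hna : ¬ H.IsAcyclic) (w : W) :
    ∃ a b, H.Adj a b ∧ a ≠ w ∧ b ≠ w := by
  unfold SimpleGraph.IsAcyclic at hna
  push_neg at hna
  obtain ⟨a, p, hp⟩ := hna
  have hlen := hp.three_le_length
  match p with
  | .nil => simp at hlen
  | .cons _ .nil => simp at hlen
  | .cons _ (.cons _ .nil) => simp [SimpleGraph.Walk.length_cons] at hlen
  | .cons (u := a) (v := s1) h1 (.cons (v := s2) h2 (.cons (v := s3) h3 rest)) =>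
    have hnd := hp.2
    simp only [Walk.support_cons, List.tail_cons, List.nodup_cons] at hnd
    have hs1s2 : s1 ≠ s2 := by
      rintro rfl; exact hnd.1 (by simp)
    have hs1s3 : s1 ≠ s3 := by
      rintro rfl; exact hnd.1 (by simp [Walk.start_mem_support])
    have has2 : a ≠ s2 := by
      have : a ∈ rest.support := Walk.end_mem_support rest
      rintro rfl; exact hnd.2.1 (by simp [this])
    by_cases h : s1 = w
    · subst h
      exact ⟨s2, s3, h3, hs1s2.symm, hs1s3.symm⟩
    · by_cases h' : s2 = w
      · subst h'
        exact ⟨a, s1, h1, has2, h⟩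
      · exact ⟨s1, s2, h2, h, h'⟩

private lemma deg3_clique (h1 : G.KCyclic 1) (hn : 5 ≤ Fintype.card V) {x : V}
    (hx : (G.neighborSet x).ncard = 3) :
    ∀ a b, G.Adj x a → G.Adj x b → a ≠ b → G.Adj a b := by
  intro a b ha hb hab
  have hdom := h1 {x} ⟨x, rfl⟩ (by simp)
  rw [setNbhd_singleton] at hdom
  have hna : ¬ (G.induce (G.neighborSet x)).IsAcyclic := by
    refine hdom.resolve_left (fun he => ?_)
    have h4 : ({x} ∪ G.neighborSet x).ncard ≤ 4 := by
      calc ({x} ∪ G.neighborSet x).ncard ≤ ({x} : Set V).ncard + (G.neighborSet x).ncard :=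
            Set.ncard_union_le _ _
      _ ≤ 4 := by rw [Set.ncard_singleton, hx]
    rw [he, Set.ncard_univ, Nat.card_eq_fintype_card] at h4
    omega
  have hsub : ({a, b} : Set V) ⊆ G.neighborSet x := by
    rintro y (rfl | rfl) <;> assumption
  have hd : ((G.neighborSet x) \ {a, b}).ncard = 1 := by
    rw [Set.ncard_diff hsub, hx, Set.ncard_pair hab]
  obtain ⟨c, hc⟩ := Set.ncard_eq_one.mp hd
  have hcN : c ∈ G.neighborSet x := by
    have : c ∈ G.neighborSet x \ {a, b} := hc ▸ rfl
    exact this.1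
  obtain ⟨α, β, hαβ, hαc, hβc⟩ := edge_avoiding hna ⟨c, hcN⟩
  have hadj : G.Adj (α : V) (β : V) := hαβ
  have hmem : ∀ γ : (G.neighborSet x : Set V), γ ≠ (⟨c, hcN⟩ : (G.neighborSet x : Set V)) →
      (γ : V) = a ∨ (γ : V) = b := by
    intro γ hγ
    have h1' : (γ : V) ∉ G.neighborSet x \ {a, b} := by
      rw [hc]
      simpa [Subtype.ext_iff] using hγ
    have := γ.2
    by_contra hcon
    push_neg at hcon
    exact h1' ⟨this, by simp [hcon.1, hcon.2]⟩
  rcases hmem α hαc with h | h <;> rcases hmem β hβc with h' | h' <;>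
    first
      | (exfalso; exact (G.ne_of_adj hadj) (h.trans h'.symm))
      | (rw [h, h'] at hadj; exact hadj)
      | (rw [h, h'] at hadj; exact hadj.symm)

/-- For a degree-3 vertex `x` adjacent to `v`, its neighborhood is `{v, p, q}`. -/
private lemma nbhd_triple {x v : V} (hadj : G.Adj v x)
    (hx : (G.neighborSet x).ncard = 3) :
    ∃ p q, p ≠ q ∧ p ≠ v ∧ q ≠ v ∧ G.neighborSet x = {v, p, q} := by
  have hv : v ∈ G.neighborSet x := hadj.symm
  have hd : ((G.neighborSet x) \ {v}).ncard = 2 := by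
    rw [Set.ncard_diff (by simpa using hv), hx, Set.ncard_singleton]
  obtain ⟨p, q, hpq, hset⟩ := Set.ncard_eq_two.mp hd
  refine ⟨p, q, hpq, ?_, ?_, ?_⟩
  · have : p ∈ G.neighborSet x \ {v} := hset ▸ (by simp)
    simpa using this.2
  · have : q ∈ G.neighborSet x \ {v} := hset ▸ (by simp)
    simpa using this.2
  · rw [show ({v, p, q} : Set V) = insert v {p, q} from rfl, ← hset,
      Set.insert_diff_singleton, Set.insert_eq_of_mem hv]

/-- Core structure: if `v` has at most two neighbors of degree ≥ 4, then there
are two distinct vertices `p q` adjacent to `v` and each other such that every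
other neighbor of `v` has neighborhood exactly `{v, p, q}`. -/
private lemma core (h3 : G.KConnected 3) (h1 : G.KCyclic 1) (hn : 5 ≤ Fintype.card V)
    (v : V) (hB : {u | u ∈ G.neighborSet v ∧ 4 ≤ (G.neighborSet u).ncard}.ncard ≤ 2) :
    ∃ p q, p ≠ q ∧ p ≠ v ∧ q ≠ v ∧ G.Adj v p ∧ G.Adj v q ∧ G.Adj p q ∧
      (∀ x, G.Adj v x → x ≠ p → x ≠ q → G.neighborSet x = {v, p, q}) := by
  set B : Set V := {u | u ∈ G.neighborSet v ∧ 4 ≤ (G.neighborSet u).ncard} with hBdef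
  have hBsub : B ⊆ G.neighborSet v := fun u hu => hu.1
  -- every vertex not in B adjacent to v has degree exactly 3
  have hdeg3 : ∀ u, G.Adj v u → u ∉ B → (G.neighborSet u).ncard = 3 := by
    intro u hu huB
    have h1' := mindeg h3 hn u
    have h2' : ¬ 4 ≤ (G.neighborSet u).ncard := fun h => huB ⟨hu, h⟩
    omega
  -- key: for any degree-3 neighbor x of v with nbhd {v,p,q}, p has degree ≥ 4
  have key : ∀ x p q, G.Adj v x → G.neighborSet x = {v, p, q} → p ≠ q → p ≠ v → q ≠ v →
      4 ≤ (G.neighborSet p).ncard := by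
    intro x p q hvx hNx hpq hpv hqv
    have hxv : x ≠ v := (G.ne_of_adj hvx).symm
    have hdx : (G.neighborSet x).ncard = 3 := by
      rw [hNx]
      rw [Set.ncard_insert_of_notMem (by simp [Ne.symm hpv, Ne.symm hqv]),
        Set.ncard_pair hpq]
    have hxp : G.Adj x p := by rw [← SimpleGraph.mem_neighborSet, hNx]; simp
    have hxq : G.Adj x q := by rw [← SimpleGraph.mem_neighborSet, hNx]; simp
    have hxpn : x ≠ p := G.ne_of_adj hxp
    have hxqn : x ≠ q := G.ne_of_adj hxq
    have hclq := deg3_clique h1 hn hdx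
    have hvp : G.Adj v p := hclq v p hvx.symm hxp (Ne.symm hpv)
    have hvq : G.Adj v q := hclq v q hvx.symm hxq (Ne.symm hqv)
    have hpqadj : G.Adj p q := hclq p q hxp hxq hpq
    by_contra hcon
    -- deg p = 3, so N(p) = {v, x, q}
    have hdp : (G.neighborSet p).ncard = 3 := by
      have := mindeg h3 hn p
      omega
    have hNp : G.neighborSet p = {v, x, q} := by
      refine (Set.eq_of_subset_of_ncard_le ?_ ?_).symm
      · rintro y (rfl | rfl | rfl)
        · exact hvp.symm
        · exact hxp.symm
        · exact hpqadj
      · rw [hdp, Set.ncard_eq_three.mpr ⟨v, x, q, Ne.symm hxv, Ne.symm hqv, hxqn, rfl⟩]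
    by_cases hdq : 4 ≤ (G.neighborSet q).ncard
    · -- remove {v, q}; then {x, p} is a closed component
      obtain ⟨z, hz⟩ := exists_outside ({v, q, x, p} : Set V) (by
        apply lt_of_le_of_lt _ (lt_of_lt_of_le (by norm_num : 4 < 5) hn)
        apply le_trans (Set.ncard_insert_le _ _)
        apply Nat.succ_le_succ
        apply le_trans (Set.ncard_insert_le _ _)
        apply Nat.succ_le_succ
        exact le_trans (Set.ncard_insert_le _ _) (by simp))
      simp only [Set.mem_insert_iff, Set.mem_singleton_iff, not_or] at hz
      refine sep_false (G := G) (z := z) {v, q} {x, p} (h3.2 _ (by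
          apply lt_of_le_of_lt (Set.ncard_insert_le _ _); simp))
        (fun a ha b hab => ?_) (Or.inl rfl) (by simp [hxv, hxqn]) ?_ ?_
      · rcases ha with rfl | rfl
        · have : b ∈ G.neighborSet a := hab
          rw [hNx] at this
          rcases this with rfl | rfl | rfl
          · exact Or.inl (Or.inl rfl)
          · exact Or.inr (Or.inr rfl)
          · exact Or.inl (Or.inr rfl)
        · have : b ∈ G.neighborSet a := hab
          rw [hNp] at this
          rcases this with rfl | rfl | rfl
          · exact Or.inl (Or.inl rfl)
          · exact Or.inr (Or.inl rfl)
          · exact Or.inl (Or.inr rfl)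
      · simp only [Set.mem_insert_iff, Set.mem_singleton_iff, not_or]
        exact ⟨hz.1, hz.2.1⟩
      · simp only [Set.mem_insert_iff, Set.mem_singleton_iff, not_or]
        exact ⟨hz.2.2.1, hz.2.2.2⟩
    · -- deg q = 3 as well: N(q) = {v, x, p}; remove {v}
      have hdq3 : (G.neighborSet q).ncard = 3 := by
        have := mindeg h3 hn q
        omega
      have hNq : G.neighborSet q = {v, x, p} := by
        refine (Set.eq_of_subset_of_ncard_le ?_ ?_).symm
        · rintro y (rfl | rfl | rfl)
          · exact hvq.symm
          · exact hxq.symm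
          · exact hpqadj.symm
        · rw [hdq3, Set.ncard_eq_three.mpr ⟨v, x, p, Ne.symm hxv, Ne.symm hpv, hxpn, rfl⟩]
      obtain ⟨z, hz⟩ := exists_outside ({v, x, p, q} : Set V) (by
        apply lt_of_le_of_lt _ (lt_of_lt_of_le (by norm_num : 4 < 5) hn)
        apply le_trans (Set.ncard_insert_le _ _)
        apply Nat.succ_le_succ
        apply le_trans (Set.ncard_insert_le _ _)
        apply Nat.succ_le_succ
        exact le_trans (Set.ncard_insert_le _ _) (by simp))
      simp only [Set.mem_insert_iff, Set.mem_singleton_iff, not_or] at hz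
      refine sep_false (G := G) (z := z) {v} {x, p, q} (h3.2 _ (by simp))
        (fun a ha b hab => ?_) (Or.inl rfl) (by simp [hxv]) ?_ ?_
      · have hb : b ∈ G.neighborSet a := hab
        rcases ha with rfl | rfl | rfl
        · rw [hNx] at hb
          rcases hb with rfl | rfl | rfl
          · exact Or.inl rfl
          · exact Or.inr (Or.inr (Or.inl rfl))
          · exact Or.inr (Or.inr (Or.inr rfl))
        · rw [hNp] at hb
          rcases hb with rfl | rfl | rfl
          · exact Or.inl rfl
          · exact Or.inr (Or.inl rfl)
          · exact Or.inr (Or.inr (Or.inr rfl))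
        · rw [hNq] at hb
          rcases hb with rfl | rfl | rfl
          · exact Or.inl rfl
          · exact Or.inr (Or.inl rfl)
          · exact Or.inr (Or.inr (Or.inl rfl))
      · simpa using hz.1
      · simp only [Set.mem_insert_iff, Set.mem_singleton_iff, not_or]
        exact ⟨hz.2.1, hz.2.2.1, hz.2.2.2⟩
  -- find a degree-3 neighbor x of v
  have hNv : 3 ≤ (G.neighborSet v).ncard := mindeg h3 hn v
  have hAne : ((G.neighborSet v) \ B).Nonempty := by
    rw [← Set.ncard_pos]
    have := Set.ncard_diff hBsub (Set.toFinite _)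
    omega
  obtain ⟨x, hxN, hxB⟩ := hAne
  have hvx : G.Adj v x := hxN
  obtain ⟨p, q, hpq, hpv, hqv, hNx⟩ := nbhd_triple hvx (hdeg3 x hvx hxB)
  have hxp : G.Adj x p := by rw [← SimpleGraph.mem_neighborSet, hNx]; simp
  have hxq : G.Adj x q := by rw [← SimpleGraph.mem_neighborSet, hNx]; simp
  have hclq := deg3_clique h1 hn (hdeg3 x hvx hxB)
  have hvp : G.Adj v p := hclq v p hvx.symm hxp (Ne.symm hpv)
  have hvq : G.Adj v q := hclq v q hvx.symm hxq (Ne.symm hqv)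
  have hpqadj : G.Adj p q := hclq p q hxp hxq hpq
  have hdp : 4 ≤ (G.neighborSet p).ncard := key x p q hvx hNx hpq hpv hqv
  have hdq : 4 ≤ (G.neighborSet q).ncard := by
    refine key x q p hvx ?_ (Ne.symm hpq) hqv hpv
    rw [hNx]
    ext y
    simp only [Set.mem_insert_iff, Set.mem_singleton_iff]
    tauto
  have hBeq : B = {p, q} := by
    refine (Set.eq_of_subset_of_ncard_le ?_ ?_).symm
    · rintro y (rfl | rfl)
      · exact ⟨hvp, hdp⟩
      · exact ⟨hvq, hdq⟩
    · rw [Set.ncard_pair hpq]; exact hB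
  refine ⟨p, q, hpq, hpv, hqv, hvp, hvq, hpqadj, fun y hvy hyp hyq => ?_⟩
  have hyB : y ∉ B := by
    rw [hBeq]
    simp [hyp, hyq]
  obtain ⟨p', q', hpq', hpv', hqv', hNy⟩ := nbhd_triple hvy (hdeg3 y hvy hyB)
  have hdp' : 4 ≤ (G.neighborSet p').ncard := key y p' q' hvy hNy hpq' hpv' hqv'
  have hdq' : 4 ≤ (G.neighborSet q').ncard := by
    refine key y q' p' hvy ?_ (Ne.symm hpq') hqv' hpv'
    rw [hNy]
    ext z
    simp only [Set.mem_insert_iff, Set.mem_singleton_iff]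
    tauto
  have hyp' : G.Adj y p' := by rw [← SimpleGraph.mem_neighborSet, hNy]; simp
  have hyq' : G.Adj y q' := by rw [← SimpleGraph.mem_neighborSet, hNy]; simp
  have hclq' := deg3_clique h1 hn (hdeg3 y hvy hyB)
  have hp'B : p' ∈ B := ⟨hclq' v p' hvy.symm hyp' (Ne.symm hpv'), hdp'⟩
  have hq'B : q' ∈ B := ⟨hclq' v q' hvy.symm hyq' (Ne.symm hqv'), hdq'⟩
  rw [hBeq] at hp'B hq'B
  rw [hNy]
  rcases hp'B with rfl | rfl <;> rcases hq'B with rfl | rfl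
  · exact absurd rfl hpq'
  · rfl
  · ext z; simp only [Set.mem_insert_iff, Set.mem_singleton_iff]; tauto
  · exact absurd rfl hpq'

end Aux

/-- A 3-connected 1-cyclic graph `G` on `n ≥ 5` vertices is isomorphic to
`K^△_{n-3}` or every vertex of `G` has at least three neighbors of degree at
least 4. -/
theorem stmt_10 {V : Type*} [Fintype V] (G : SimpleGraph V)
    (h3 : G.KConnected 3) (h1 : G.KCyclic 1) (hn : 5 ≤ Fintype.card V) :
    Nonempty (G ≃g KTri (Fintype.card V - 3)) ∨
      ∀ v : V, 3 ≤ {u | u ∈ G.neighborSet v ∧ 4 ≤ (G.neighborSet u).ncard}.ncard := by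
  classical
  by_cases hright : ∀ v : V, 3 ≤ {u | u ∈ G.neighborSet v ∧ 4 ≤ (G.neighborSet u).ncard}.ncard
  · exact Or.inr hright
  left
  push_neg at hright
  obtain ⟨v, hv⟩ := hright
  obtain ⟨p, q, hpq, hpv, hqv, hvp, hvq, hpqadj, hstruct⟩ :=
    core h3 h1 hn v (by omega)
  -- v is universal
  have huniv : ∀ w, w ≠ v → G.Adj v w := by
    intro w hw
    by_contra hcon
    refine sep_false (G := G) (z := w) {p, q} (insert v (G.neighborSet v \ {p, q}))
      (h3.2 _ (by apply lt_of_le_of_lt (Set.ncard_insert_le _ _); simp))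
      (fun a ha b hab => ?_) (Or.inl rfl) (by simp [Ne.symm hpv, Ne.symm hqv]) ?_ ?_
    · rcases ha with rfl | ⟨haN, haPQ⟩
      · -- a = v : its neighbors are in N(v) ⊆ {p,q} ∪ (N(v) \ {p,q})
        by_cases hb : b = p ∨ b = q
        · exact Or.inl hb
        · push_neg at hb
          exact Or.inr (Or.inr ⟨hab, by simp [hb.1, hb.2]⟩)
      · -- a ∈ N(v) \ {p,q} : N(a) = {v,p,q}
        simp only [Set.mem_insert_iff, Set.mem_singleton_iff, not_or] at haPQ
        have hNa := hstruct a haN haPQ.1 haPQ.2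
        have hb : b ∈ G.neighborSet a := hab
        rw [hNa] at hb
        rcases hb with rfl | rfl | rfl
        · exact Or.inr (Or.inl rfl)
        · exact Or.inl (Or.inl rfl)
        · exact Or.inl (Or.inr rfl)
    · -- z = w : not in {p,q}
      simp only [Set.mem_insert_iff, Set.mem_singleton_iff, not_or]
      constructor
      · rintro rfl; exact hcon hvp
      · rintro rfl; exact hcon hvq
    · -- z = w : not in D
      simp only [Set.mem_insert_iff, not_or]
      exact ⟨hw, fun hmem => hcon hmem.1⟩
  -- adjacency characterization
  set T : Set V := {v, p, q} with hT
  have hTadj : ∀ t ∈ T, ∀ w, w ≠ t → G.Adj t w := by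
    intro t ht w hw
    simp only [hT, Set.mem_insert_iff, Set.mem_singleton_iff] at ht
    rcases ht with h | h | h <;> rw [h] at hw ⊢
    · exact huniv w hw
    ·
      by_cases hwv : w = v
      · subst hwv; exact hvp.symm
      · by_cases hwq : w = q
        · subst hwq; exact hpqadj
        · have hN := hstruct w (huniv w hwv) hw hwq
          have hmem : p ∈ G.neighborSet w := by rw [hN]; simp [hT]
          exact (SimpleGraph.mem_neighborSet _ _ _ |>.mp hmem).symm
    ·
      by_cases hwv : w = v
      · subst hwv; exact hvq.symm
      · by_cases hwp : w = p
        · subst hwp; exact hpqadj.symm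
        · have hN := hstruct w (huniv w hwv) hwp hw
          have hmem : q ∈ G.neighborSet w := by rw [hN]; simp [hT]
          exact (SimpleGraph.mem_neighborSet _ _ _ |>.mp hmem).symm
  have hchar : ∀ u w, G.Adj u w ↔ (u ≠ w ∧ (u ∈ T ∨ w ∈ T)) := by
    intro u w
    constructor
    · intro h
      refine ⟨G.ne_of_adj h, ?_⟩
      by_contra hcon
      push_neg at hcon
      obtain ⟨huT, hwT⟩ := hcon
      simp only [hT, Set.mem_insert_iff, Set.mem_singleton_iff, not_or] at huT hwT
      have hNu := hstruct u (huniv u huT.1) huT.2.1 huT.2.2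
      have : w ∈ G.neighborSet u := h
      rw [hNu] at this
      rcases this with rfl | rfl | rfl
      · exact hwT.1 rfl
      · exact hwT.2.1 rfl
      · exact hwT.2.2 rfl
    · rintro ⟨hne, hmem | hmem⟩
      · exact hTadj u hmem w hne.symm
      · exact (hTadj w hmem u hne).symm
  -- build the isomorphism
  have hTcard : T.ncard = 3 := Set.ncard_eq_three.mpr ⟨v, p, q, Ne.symm hpv, Ne.symm hqv, hpq, rfl⟩
  have hc1 : Fintype.card ↥T = 3 := by
    rw [← Nat.card_eq_fintype_card, Nat.card_coe_set_eq, hTcard]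
  have hc2 : Fintype.card ↥(Tᶜ : Set V) = Fintype.card V - 3 := by
    have := Set.ncard_add_ncard_compl T
    rw [Nat.card_eq_fintype_card, hTcard] at this
    rw [← Nat.card_eq_fintype_card, Nat.card_coe_set_eq]
    omega
  let e : V ≃ (Fin 3 ⊕ Fin (Fintype.card V - 3)) :=
    (Equiv.Set.sumCompl T).symm.trans
      ((Fintype.equivFinOfCardEq hc1).sumCongr (Fintype.equivFinOfCardEq hc2))
  have hleft : ∀ u : V, ((e u).isLeft = true) ↔ u ∈ T := by
    intro u
    by_cases h : u ∈ T
    · have he : e u = Sum.inl ((Fintype.equivFinOfCardEq hc1) ⟨u, h⟩) := by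
        simp [e, Equiv.Set.sumCompl_symm_apply_of_mem h]
      simp [he, h]
    · have he : e u = Sum.inr ((Fintype.equivFinOfCardEq hc2) ⟨u, h⟩) := by
        simp [e, Equiv.Set.sumCompl_symm_apply_of_notMem h]
      simp [he, h]
  refine ⟨⟨e, ?_⟩⟩
  intro a b
  rw [hchar a b]
  simp only [KTri, SimpleGraph.fromRel_adj]
  constructor
  · rintro ⟨hne, h⟩
    refine ⟨e.injective.ne_iff.mp hne, ?_⟩
    rcases h with (h | h) | (h | h)
    · exact Or.inl ((hleft a).mp h)
    · exact Or.inr ((hleft b).mp h)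
    · exact Or.inr ((hleft b).mp h)
    · exact Or.inl ((hleft a).mp h)
  · rintro ⟨hne, h⟩
    refine ⟨e.injective.ne_iff.mpr hne, ?_⟩
    rcases h with h | h
    · exact Or.inl (Or.inl ((hleft a).mpr h))
    · exact Or.inl (Or.inr ((hleft b).mpr h))
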